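/- For any positive integer $b$, $\sum_{c=1}^{b} \frac{(-1)^c}{(b-c)!\,c!\,c} = -\frac{H_b}{b!}$, where $H_b = \sum_{j=1}^{b} 1/j$ is the $b$-th harmonic number. -/

import Mathlib

lemma alt_choose_sum (n : ℕ) (hn : 0 < n) :
    ∑ c ∈ Finset.Icc 1 n, ((-1 : ℚ) ^ c * (n.choose c : ℚ)) = -1 := by
  have h := Int.alternating_sum_range_choose (n := n)
  rw [if_neg hn.ne'] at h
  have hq : ∑ i ∈ Finset.range (n + 1), ((-1 : ℚ) ^ i * (n.choose i : ℚ)) = 0 := by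
    have := congrArg (fun z : ℤ => (z : ℚ)) h
    push_cast at this
    simpa using this
  have : Finset.range (n + 1) = insert 0 (Finset.Icc 1 n) := by
    ext x
    simp [Finset.mem_range, Finset.mem_Icc, Nat.lt_succ_iff]
    omega
  rw [this, Finset.sum_insert (by simp)] at hq
  simp at hq
  linarith

lemma aux_sum (b : ℕ) :
    ∑ c ∈ Finset.Icc 1 b, ((-1 : ℚ) ^ c * (b.choose c : ℚ) / (c : ℚ)) = - harmonic b := by
  induction b with
  | zero => simp [harmonic]
  | succ b ih =>
    have key : ∀ c ∈ Finset.Icc 1 (b + 1),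
        ((-1 : ℚ) ^ c * ((b+1).choose c : ℚ) / (c : ℚ))
        = (-1 : ℚ) ^ c * (b.choose c : ℚ) / (c : ℚ)
          + ((-1 : ℚ) ^ c * ((b+1).choose c : ℚ)) / (b + 1 : ℚ) := by
      intro c hc
      simp only [Finset.mem_Icc] at hc
      obtain ⟨hc1, hc2⟩ := hc
      have hch : (b + 1).choose c = b.choose c + b.choose (c - 1) := by
        obtain ⟨d, rfl⟩ : ∃ d, c = d + 1 := ⟨c - 1, by omega⟩
        simp [Nat.choose_succ_succ, Nat.add_comm]
      have hmul : (b + 1) * b.choose (c - 1) = (b + 1).choose c * c := by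
        have : c = (c - 1) + 1 := by omega
        rw [this]
        exact Nat.add_one_mul_choose_eq b (c - 1)
      have hcq : (c : ℚ) ≠ 0 := by positivity
      have hbq : ((b : ℚ) + 1) ≠ 0 := by positivity
      have hmulq : ((b : ℚ) + 1) * (b.choose (c - 1) : ℚ) = ((b+1).choose c : ℚ) * c := by
        exact_mod_cast congrArg (fun n : ℕ => (n : ℚ)) hmul
      have hchq : (((b+1).choose c : ℚ)) = (b.choose c : ℚ) + (b.choose (c-1) : ℚ) := by
        exact_mod_cast congrArg (fun n : ℕ => (n : ℚ)) hch
      have e : (((b+1).choose c : ℚ)) / ((b : ℚ) + 1) = (b.choose (c - 1) : ℚ) / (c : ℚ) := by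
        rw [div_eq_div_iff hbq hcq]
        linarith [hmulq]
      simp only [mul_div_assoc]
      rw [e, hchq]
      ring
    rw [Finset.sum_congr rfl key, Finset.sum_add_distrib]
    have h1 : ∑ c ∈ Finset.Icc 1 (b + 1), ((-1 : ℚ) ^ c * (b.choose c : ℚ) / (c : ℚ))
        = - harmonic b := by
      rw [← ih]
      rw [show b + 1 = b + 1 from rfl]
      rw [Finset.sum_Icc_succ_top (by omega)]
      simp [Nat.choose_succ_self]
    have h2 : ∑ c ∈ Finset.Icc 1 (b + 1), ((-1 : ℚ) ^ c * ((b+1).choose c : ℚ)) / ((b : ℚ) + 1)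
        = -1 / ((b : ℚ) + 1) := by
      rw [← Finset.sum_div, alt_choose_sum (b + 1) (by omega)]
    rw [h1, h2, harmonic_succ]
    push_cast
    ring

theorem stmt0 (b : ℕ) (hb : 0 < b) :
    ∑ c ∈ Finset.Icc 1 b,
      ((-1 : ℚ) ^ c / ((Nat.factorial (b - c) : ℚ) * (Nat.factorial c : ℚ) * (c : ℚ)))
      = - harmonic b / (Nat.factorial b : ℚ) := by
  have key : ∀ c ∈ Finset.Icc 1 b,
      ((-1 : ℚ) ^ c / ((Nat.factorial (b - c) : ℚ) * (Nat.factorial c : ℚ) * (c : ℚ)))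
      = ((-1 : ℚ) ^ c * (b.choose c : ℚ) / (c : ℚ)) / (Nat.factorial b : ℚ) := by
    intro c hc
    simp only [Finset.mem_Icc] at hc
    have hfact : b.choose c * c.factorial * (b - c).factorial = b.factorial :=
      Nat.choose_mul_factorial_mul_factorial hc.2
    have hfq : ((b.choose c : ℚ)) * (c.factorial : ℚ) * ((b - c).factorial : ℚ) = (b.factorial : ℚ) := by
      exact_mod_cast congrArg (fun n : ℕ => (n : ℚ)) hfact
    have h1 : ((b - c).factorial : ℚ) ≠ 0 := by positivity
    have h2 : ((c.factorial : ℚ)) ≠ 0 := by positivity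
    have h3 : ((c : ℚ)) ≠ 0 := by
      have : 0 < c := hc.1
      positivity
    have h4 : ((b.factorial : ℚ)) ≠ 0 := by positivity
    have h5 : ((b.choose c : ℚ)) ≠ 0 := by
      have := Nat.choose_pos hc.2
      positivity
    rw [← hfq]
    field_simp
  rw [Finset.sum_congr rfl key, ← Finset.sum_div, aux_sum b]
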